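/- Let ᾱ ∈ (0, π] and β̄ ∈ [−π/2, π/2], and set λ̄ = −ᾱ/2 if ᾱ ∈ [π/4, 3π/4] and λ̄ = π/4 − ᾱ/2 otherwise. Then sin λ̄ · cos λ̄ ≠ 0 and sin(λ̄ + ᾱ) · cos(λ̄ + ᾱ) ≠ 0. Moreover, if α, β : ℝ → ℝ are differentiable with α(0) = λ̄, α(1) = λ̄ + ᾱ, α'(0) = α'(1) = ᾱ·cos β̄, β(0) = β(1) = β̄, β'(0) = −ᾱ·sin β̄/(sin λ̄·cos λ̄), and β'(1) = −ᾱ·sin β̄/(sin(λ̄+ᾱ)·cos(λ̄+ᾱ)), then the complex-valued function z(s) = exp(−i β(s))·(α'(s) − i β'(s)·sin α(s)·cos α(s)) satisfies z(0) = z(1) = ᾱ. -/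

import Mathlib

open Set

lemma aux_sc_ne (x : ℝ) (h : Real.sin (2*x) ≠ 0) : Real.sin x * Real.cos x ≠ 0 := by
  intro hc
  exact h (by rw [Real.sin_two_mul, mul_assoc, hc, mul_zero])

lemma aux_sin_ne_pos (y : ℝ) (h0 : 0 < y) (h1 : y < Real.pi) : Real.sin y ≠ 0 :=
  ne_of_gt (Real.sin_pos_of_pos_of_lt_pi h0 h1)

lemma aux_sin_ne_neg (y : ℝ) (h0 : -Real.pi < y) (h1 : y < 0) : Real.sin y ≠ 0 := by
  have := Real.sin_pos_of_pos_of_lt_pi (x := -y) (by linarith) (by linarith)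
  rw [Real.sin_neg] at this
  exact ne_of_lt (by linarith)

lemma aux_sin_ne_big (y : ℝ) (h0 : Real.pi < y) (h1 : y < 2 * Real.pi) : Real.sin y ≠ 0 := by
  have := Real.sin_pos_of_pos_of_lt_pi (x := y - Real.pi) (by linarith) (by linarith)
  rw [Real.sin_sub_pi] at this
  exact ne_of_lt (by linarith)

lemma aux_exp (b A B αb : ℝ) (hA : A = αb * Real.cos b) (hB : B = -(αb * Real.sin b)) :
    Complex.exp (-(b:ℂ) * Complex.I) * ((A:ℂ) - Complex.I * (B:ℂ)) = (αb:ℂ) := by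
  have h1 : ((A:ℂ) - Complex.I * (B:ℂ)) = (αb:ℂ) * Complex.exp ((b:ℂ) * Complex.I) := by
    rw [hA, hB, Complex.exp_mul_I]
    push_cast
    rw [← Complex.ofReal_cos, ← Complex.ofReal_sin]
    push_cast
    ring
  rw [h1, ← mul_assoc, mul_comm (Complex.exp _), mul_assoc, ← Complex.exp_add]
  simp

theorem stmt_12
    (αb βb lamb : ℝ)
    (hαb : αb ∈ Ioc (0:ℝ) Real.pi)
    (hβb : βb ∈ Icc (-(Real.pi/2)) (Real.pi/2))
    (hlamb : lamb = if αb ∈ Icc (Real.pi/4) (3 * Real.pi/4) then -αb/2 else Real.pi/4 - αb/2)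
    (α β α' β' : ℝ → ℝ)
    (hα : ∀ s, HasDerivAt α (α' s) s)
    (hβ : ∀ s, HasDerivAt β (β' s) s)
    (hα0 : α 0 = lamb) (hα1 : α 1 = lamb + αb)
    (hα'0 : α' 0 = αb * Real.cos βb) (hα'1 : α' 1 = αb * Real.cos βb)
    (hβ0 : β 0 = βb) (hβ1 : β 1 = βb)
    (hβ'0 : β' 0 = -(αb * Real.sin βb) / (Real.sin lamb * Real.cos lamb))
    (hβ'1 : β' 1 = -(αb * Real.sin βb) / (Real.sin (lamb + αb) * Real.cos (lamb + αb)))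
    (z : ℝ → ℂ)
    (hz : ∀ s, z s = Complex.exp (-(β s : ℂ) * Complex.I) *
      (((α' s : ℝ) : ℂ) -
        Complex.I * ((β' s * Real.sin (α s) * Real.cos (α s) : ℝ) : ℂ))) :
    Real.sin lamb * Real.cos lamb ≠ 0 ∧
      Real.sin (lamb + αb) * Real.cos (lamb + αb) ≠ 0 ∧
      z 0 = (αb : ℂ) ∧ z 1 = (αb : ℂ) := by
  obtain ⟨ha0, ha1⟩ := hαb
  have hpi := Real.pi_pos
  have h1 : Real.sin lamb * Real.cos lamb ≠ 0 := by
    apply aux_sc_ne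
    by_cases hc : αb ∈ Icc (Real.pi/4) (3 * Real.pi/4)
    · rw [hlamb, if_pos hc]
      obtain ⟨hc1, hc2⟩ := hc
      exact aux_sin_ne_neg _ (by linarith) (by linarith)
    · rw [hlamb, if_neg hc]
      rw [mem_Icc, not_and_or, not_le, not_le] at hc
      rcases hc with hc | hc
      · exact aux_sin_ne_pos _ (by linarith) (by linarith)
      · exact aux_sin_ne_neg _ (by linarith) (by linarith)
  have h2 : Real.sin (lamb + αb) * Real.cos (lamb + αb) ≠ 0 := by
    apply aux_sc_ne
    by_cases hc : αb ∈ Icc (Real.pi/4) (3 * Real.pi/4)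
    · rw [hlamb, if_pos hc]
      obtain ⟨hc1, hc2⟩ := hc
      exact aux_sin_ne_pos _ (by linarith) (by linarith)
    · rw [hlamb, if_neg hc]
      rw [mem_Icc, not_and_or, not_le, not_le] at hc
      rcases hc with hc | hc
      · exact aux_sin_ne_pos _ (by linarith) (by linarith)
      · exact aux_sin_ne_big _ (by linarith) (by linarith)
  refine ⟨h1, h2, ?_, ?_⟩
  · rw [hz 0, hβ0]
    exact aux_exp βb _ _ αb (by rw [hα'0]) (by
      rw [hβ'0, hα0, mul_assoc, div_mul_cancel₀ _ h1])
  · rw [hz 1, hβ1]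
    exact aux_exp βb _ _ αb (by rw [hα'1]) (by
      rw [hβ'1, hα1, mul_assoc, div_mul_cancel₀ _ h2])
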